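/- For all real numbers 0 < z₀ ≤ z_f < 1, ∫_{z₀}^{z_f} dz / (z√(1−z²)) = log[ z_f (1 + √(1 − z₀²)) / ( z₀ (1 + √(1 − z_f²)) ) ]. In particular, for real N > 1/2 and z₀ = 1/√(2N), twice this integral equals 2 log[ z_f (√(2N) + √(2N−1)) / (1 + √(1 − z_f²)) ], which is the traveling time χ·t along the TaT separatrix at critical coupling from the edge of the spin-coherent-state uncertainty patch Z(0) = 1/√(2N) to Z(t_f) = z_f; taking z_f = 1 gives the time to the first peak of the quantum Fisher information, χ·t = 2 log(√(2N) + √(2N−1)). -/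

import Mathlib

private lemma hderiv_aux (z : ℝ) (hz : 0 < z) (hz1 : z < 1) :
    HasDerivAt (fun z : ℝ => Real.log z - Real.log (1 + Real.sqrt (1 - z ^ 2)))
      (1 / (z * Real.sqrt (1 - z ^ 2))) z := by
  have hz2 : (0:ℝ) < 1 - z ^ 2 := by nlinarith
  set s := Real.sqrt (1 - z ^ 2) with hs
  have hspos : 0 < s := Real.sqrt_pos.mpr hz2
  have hssq : s ^ 2 = 1 - z ^ 2 := Real.sq_sqrt hz2.le
  have h1 : HasDerivAt (fun z : ℝ => 1 - z ^ 2) (-(2 * z)) z := by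
    simpa using ((hasDerivAt_pow 2 z).const_sub 1)
  have h2 : HasDerivAt (fun z : ℝ => Real.sqrt (1 - z ^ 2))
      (-(2 * z) / (2 * s)) z := by
    have := (Real.hasDerivAt_sqrt (ne_of_gt hz2)).comp z h1
    refine this.congr_deriv ?_
    rw [hs]; field_simp
  have h3 : HasDerivAt (fun z : ℝ => 1 + Real.sqrt (1 - z ^ 2))
      (-(2 * z) / (2 * s)) z := h2.const_add 1
  have h4 : HasDerivAt (fun z : ℝ => Real.log (1 + Real.sqrt (1 - z ^ 2)))
      ((-(2 * z) / (2 * s)) / (1 + s)) z :=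
    h3.log (by positivity)
  have h5 := (Real.hasDerivAt_log (ne_of_gt hz)).sub h4
  refine h5.congr_deriv ?_
  field_simp
  nlinarith [hssq, mul_pos hz hspos, sq_nonneg (z*s)]

theorem TaT_travel_time :
    (∀ z₀ zf : ℝ, 0 < z₀ → z₀ ≤ zf → zf < 1 →
      ∫ z in z₀..zf, 1 / (z * Real.sqrt (1 - z ^ 2)) =
        Real.log (zf * (1 + Real.sqrt (1 - z₀ ^ 2)) /
          (z₀ * (1 + Real.sqrt (1 - zf ^ 2))))) ∧
    (∀ N zf : ℝ, 1 / 2 < N → 1 / Real.sqrt (2 * N) ≤ zf → zf < 1 →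
      2 * ∫ z in (1 / Real.sqrt (2 * N))..zf, 1 / (z * Real.sqrt (1 - z ^ 2)) =
        2 * Real.log (zf * (Real.sqrt (2 * N) + Real.sqrt (2 * N - 1)) /
          (1 + Real.sqrt (1 - zf ^ 2)))) := by
  have main : ∀ z₀ zf : ℝ, 0 < z₀ → z₀ ≤ zf → zf < 1 →
      ∫ z in z₀..zf, 1 / (z * Real.sqrt (1 - z ^ 2)) =
        Real.log (zf * (1 + Real.sqrt (1 - z₀ ^ 2)) /
          (z₀ * (1 + Real.sqrt (1 - zf ^ 2)))) := by
    intro z₀ zf h0 hle h1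
    have hmem : ∀ z ∈ Set.uIcc z₀ zf, 0 < z ∧ z < 1 := by
      intro z hz
      rw [Set.uIcc_of_le hle] at hz
      exact ⟨lt_of_lt_of_le h0 hz.1, lt_of_le_of_lt hz.2 h1⟩
    have hint : ∫ z in z₀..zf, 1 / (z * Real.sqrt (1 - z ^ 2)) =
        (Real.log zf - Real.log (1 + Real.sqrt (1 - zf ^ 2))) -
        (Real.log z₀ - Real.log (1 + Real.sqrt (1 - z₀ ^ 2))) := by
      apply intervalIntegral.integral_eq_sub_of_hasDerivAt
      · intro z hz
        exact hderiv_aux z (hmem z hz).1 (hmem z hz).2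
      · apply ContinuousOn.intervalIntegrable
        apply ContinuousOn.div continuousOn_const
        · exact continuousOn_id.mul
            (Real.continuous_sqrt.comp_continuousOn
              (by fun_prop))
        · intro z hz
          obtain ⟨hz0, hz1⟩ := hmem z hz
          have : 0 < Real.sqrt (1 - z ^ 2) := Real.sqrt_pos.mpr (by nlinarith)
          positivity
    rw [hint]
    have hz0f : (0:ℝ) < zf := lt_of_lt_of_le h0 hle
    have ha : (0:ℝ) < 1 + Real.sqrt (1 - z₀ ^ 2) := by positivity
    have hb : (0:ℝ) < 1 + Real.sqrt (1 - zf ^ 2) := by positivity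
    rw [Real.log_div (by positivity) (by positivity),
        Real.log_mul (ne_of_gt hz0f) (ne_of_gt ha),
        Real.log_mul (ne_of_gt h0) (ne_of_gt hb)]
    ring
  refine ⟨main, ?_⟩
  intro N zf hN hle h1
  have hNpos : (0:ℝ) < 2 * N := by linarith
  have hs : (0:ℝ) < Real.sqrt (2 * N) := Real.sqrt_pos.mpr hNpos
  have h0 : (0:ℝ) < 1 / Real.sqrt (2 * N) := by positivity
  rw [main _ _ h0 hle h1]
  congr 2
  have hsq : Real.sqrt (2 * N) ^ 2 = 2 * N := Real.sq_sqrt hNpos.le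
  have hinv : (1 / Real.sqrt (2 * N)) ^ 2 = 1 / (2 * N) := by
    rw [div_pow, one_pow, hsq]
  have h1m : (0:ℝ) ≤ 1 - 1 / (2 * N) := by
    rw [sub_nonneg, div_le_one hNpos]; linarith
  have key : Real.sqrt (1 - (1 / Real.sqrt (2 * N)) ^ 2) =
      Real.sqrt (2 * N - 1) / Real.sqrt (2 * N) := by
    rw [hinv, eq_div_iff (ne_of_gt hs), ← Real.sqrt_mul h1m]
    congr 1
    field_simp
  rw [key]
  have hb : (0:ℝ) < 1 + Real.sqrt (1 - zf ^ 2) := by positivity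
  rw [div_eq_div_iff (by positivity) (by positivity)]
  field_simp
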